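/- For any ordering σ of {2,…,n}, the σ-minimal assignment is unique: there is exactly one bistochastic matrix that is not σ-dominated by any other bistochastic matrix. -/
import Mathlib


open Finset

/-- An n×n matrix with nonnegative real entries whose rows and columns each sum to 1. -/
def Bistochastic {n : ℕ} (x : Fin n → Fin n → ℝ) : Prop :=
  (∀ i o, 0 ≤ x i o) ∧ (∀ i, ∑ o, x i o = 1) ∧ (∀ o, ∑ i, x i o = 1)

/-- `tailProb rank x i k` = probability that agent `i` receives an object ranked `k`-th
or worse (ranks are 0-indexed: rank 0 = most preferred). -/
def tailProb {n : ℕ} (rank : Fin n → Fin n → Fin n) (x : Fin n → Fin n → ℝ)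
    (i k : Fin n) : ℝ :=
  ∑ o ∈ Finset.univ.filter (fun o => k ≤ rank i o), x i o

/-- The values of `v` rearranged in non-increasing order. -/
noncomputable def sortedDesc {n : ℕ} (v : Fin n → ℝ) : Fin n → ℝ :=
  fun j => v (Tuple.sort (fun i => -v i) j)

/-- Block `t` of `Bvec rank x` is the non-increasing rearrangement of the tail
probabilities at threshold `n-1-t`; so blocks run from the worst rank down. -/
noncomputable def Bvec {n : ℕ} (rank : Fin n → Fin n → Fin n) (x : Fin n → Fin n → ℝ) :
    Fin n → Fin n → ℝ :=
  fun t => sortedDesc (fun i => tailProb rank x i t.rev)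

/-- Lexicographic strict order on doubly-indexed vectors (outer index first). -/
def BlockLexLt {α β : Type*} [LinearOrder α] [LinearOrder β] (u v : α → β → ℝ) : Prop :=
  ∃ t s, u t s < v t s ∧ ∀ t' s', (t' < t ∨ (t' = t ∧ s' < s)) → u t' s' = v t' s'

/-- `x` Rawlsian-dominates `y`. -/
def RDom {n : ℕ} (rank : Fin n → Fin n → Fin n) (x y : Fin n → Fin n → ℝ) : Prop :=
  BlockLexLt (Bvec rank x) (Bvec rank y)

/-- A Rawlsian assignment: a bistochastic matrix not R-dominated by any other. -/
def Rawlsian {n : ℕ} (rank : Fin n → Fin n → Fin n) (x : Fin n → Fin n → ℝ) : Prop :=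
  Bistochastic x ∧ ∀ y, Bistochastic y → ¬ RDom rank y x

/-- `Bσ`: block `j` is the non-increasing rearrangement of the tail probabilities at
threshold `σ j`. -/
noncomputable def BvecSigma {m : ℕ} (σ : Fin m → Fin (m + 1))
    (rank : Fin (m + 1) → Fin (m + 1) → Fin (m + 1)) (x : Fin (m + 1) → Fin (m + 1) → ℝ) :
    Fin m → Fin (m + 1) → ℝ :=
  fun j => sortedDesc (fun i => tailProb rank x i (σ j))

def SigmaDom {m : ℕ} (σ : Fin m → Fin (m + 1))
    (rank : Fin (m + 1) → Fin (m + 1) → Fin (m + 1)) (x y : Fin (m + 1) → Fin (m + 1) → ℝ) :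
    Prop :=
  BlockLexLt (BvecSigma σ rank x) (BvecSigma σ rank y)

def SigmaMinimal {m : ℕ} (σ : Fin m → Fin (m + 1))
    (rank : Fin (m + 1) → Fin (m + 1) → Fin (m + 1)) (x : Fin (m + 1) → Fin (m + 1) → ℝ) :
    Prop :=
  Bistochastic x ∧ ∀ y, Bistochastic y → ¬ SigmaDom σ rank y x

lemma sortedDesc_antitone {n : ℕ} (v : Fin n → ℝ) : Antitone (sortedDesc v) := by
  intro a b hab
  have := Tuple.monotone_sort (fun i => -v i) hab
  simpa [sortedDesc] using this

lemma card_prefix {n p : ℕ} (hp : p ≤ n) :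
    (univ.filter (fun s : Fin n => s.val < p)).card = p := by
  have himg : (univ.filter (fun s : Fin n => s.val < p)).image Fin.val = Finset.range p := by
    ext k
    simp only [mem_image, mem_filter, mem_univ, true_and, mem_range]
    constructor
    · rintro ⟨s, hs, rfl⟩; exact hs
    · intro hk; exact ⟨⟨k, lt_of_lt_of_le hk hp⟩, hk, rfl⟩
  have := congrArg Finset.card himg
  rwa [Finset.card_image_of_injective _ Fin.val_injective, Finset.card_range] at this

noncomputable def topSum {n : ℕ} (v : Fin n → ℝ) (p : ℕ) : ℝ :=
  ∑ s ∈ univ.filter (fun s : Fin n => s.val < p), sortedDesc v s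

lemma sum_le_prefix {n : ℕ} (a : Fin n → ℝ) (ha : Antitone a) (T : Finset (Fin n)) :
    ∑ i ∈ T, a i ≤ ∑ i ∈ univ.filter (fun s : Fin n => s.val < T.card), a i := by
  set p := T.card with hp
  set P := univ.filter (fun s : Fin n => s.val < p) with hP
  have hcardP : P.card = p := by
    have hpn : p ≤ n := by simpa using Finset.card_le_card (Finset.subset_univ T)
    -- card_prefix inline
    have himg : P.image Fin.val = Finset.range p := by
      ext k
      simp only [hP, mem_image, mem_filter, mem_univ, true_and, mem_range]
      constructor
      · rintro ⟨s, hs, rfl⟩; exact hs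
      · intro hk; exact ⟨⟨k, lt_of_lt_of_le hk hpn⟩, hk, rfl⟩
    have := congrArg Finset.card himg
    rwa [Finset.card_image_of_injective _ Fin.val_injective, Finset.card_range] at this
  have hsplitT : ∑ i ∈ T ∩ P, a i + ∑ i ∈ T \ P, a i = ∑ i ∈ T, a i :=
    Finset.sum_inter_add_sum_sdiff T P a
  have hsplitP : ∑ i ∈ P ∩ T, a i + ∑ i ∈ P \ T, a i = ∑ i ∈ P, a i :=
    Finset.sum_inter_add_sum_sdiff P T a
  have hPT : ∑ i ∈ P ∩ T, a i = ∑ i ∈ T ∩ P, a i := by rw [Finset.inter_comm]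
  have hcard : (T \ P).card = (P \ T).card := by
    have h1 := Finset.card_sdiff_add_card_inter T P
    have h2 := Finset.card_sdiff_add_card_inter P T
    rw [Finset.inter_comm] at h2
    omega
  have e := Finset.equivOfCardEq hcard
  have key : ∑ i ∈ T \ P, a i ≤ ∑ i ∈ P \ T, a i := by
    rw [← Finset.sum_attach (T \ P) a, ← Finset.sum_attach (P \ T) a,
      ← Finset.univ_eq_attach, ← Finset.univ_eq_attach]
    rw [← Equiv.sum_comp e (fun y => a y.val)]
    apply Finset.sum_le_sum
    intro x _
    apply ha
    have hx : ¬ (x.val.val < p) := by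
      have := x.2; rw [Finset.mem_sdiff] at this
      simpa [hP] using this.2
    have hy : ((e x).val.val < p) := by
      have := (e x).2; rw [Finset.mem_sdiff] at this
      simpa [hP] using this.1
    have : (e x).val.val ≤ x.val.val := by omega
    exact this
  show ∑ i ∈ T, a i ≤ ∑ i ∈ P, a i
  linarith

lemma sum_le_topSum {n : ℕ} (v : Fin n → ℝ) (T : Finset (Fin n)) :
    ∑ i ∈ T, v i ≤ topSum v T.card := by
  classical
  set π := Tuple.sort (fun i => -v i) with hπ
  have hanti : Antitone (sortedDesc v) := by
    intro a b hab
    have := Tuple.monotone_sort (fun i => -v i) hab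
    simpa [sortedDesc] using this
  have hT : ∑ i ∈ T, v i = ∑ j ∈ T.map π.symm.toEmbedding, sortedDesc v j := by
    rw [Finset.sum_map]
    apply Finset.sum_congr rfl
    intro i _
    simp [sortedDesc, hπ]
  rw [hT]
  have hcard : (T.map π.symm.toEmbedding).card = T.card := Finset.card_map _
  calc ∑ j ∈ T.map π.symm.toEmbedding, sortedDesc v j
      ≤ ∑ j ∈ univ.filter (fun s : Fin n => s.val < (T.map π.symm.toEmbedding).card), sortedDesc v j :=
        sum_le_prefix _ hanti _
    _ = topSum v T.card := by rw [hcard]; rfl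
section PS
variable {n : ℕ} (u v w : Fin n → ℝ)

lemma topSum_eq_sum_map (p : ℕ) :
    topSum w p = ∑ i ∈ (univ.filter (fun s : Fin n => s.val < p)).map
      (Tuple.sort (fun i => -w i)).toEmbedding, w i := by
  rw [Finset.sum_map]
  rfl

lemma sum_avg (hw : ∀ i, w i = (u i + v i) / 2) (S : Finset (Fin n)) :
    ∑ i ∈ S, w i = (∑ i ∈ S, u i + ∑ i ∈ S, v i) / 2 := by
  rw [Finset.sum_congr rfl (fun i _ => hw i), ← Finset.sum_div, Finset.sum_add_distrib]

lemma topSum_avg (hw : ∀ i, w i = (u i + v i) / 2) (p : ℕ) (hp : p ≤ n) :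
    topSum w p ≤ (topSum u p + topSum v p) / 2 := by
  set S := (univ.filter (fun s : Fin n => s.val < p)).map
      (Tuple.sort (fun i => -w i)).toEmbedding with hS
  have hcard : S.card = p := by rw [hS, Finset.card_map, card_prefix hp]
  have h1 : topSum w p = ∑ i ∈ S, w i := topSum_eq_sum_map w p
  have h2 : ∑ i ∈ S, u i ≤ topSum u p := by
    have := sum_le_topSum u S; rwa [hcard] at this
  have h3 : ∑ i ∈ S, v i ≤ topSum v p := by
    have := sum_le_topSum v S; rwa [hcard] at this
  have h4 := sum_avg u v w hw S
  linarith

lemma prefix_succ (s : Fin n) :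
    univ.filter (fun j : Fin n => j.val < s.val + 1)
      = insert s (univ.filter (fun j : Fin n => j.val < s.val)) := by
  ext j
  simp only [mem_filter, mem_univ, true_and, mem_insert]
  constructor
  · intro h
    rcases Nat.lt_succ_iff_lt_or_eq.mp h with h | h
    · exact Or.inr h
    · exact Or.inl (Fin.ext h)
  · rintro (rfl | h)
    · omega
    · omega

lemma avg_sorted_eq (hw : ∀ i, w i = (u i + v i) / 2)
    (hu : sortedDesc u = sortedDesc w) (hv : sortedDesc v = sortedDesc w) : u = v := by
  set π := Tuple.sort (fun i => -w i) with hπ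
  set S : ℕ → Finset (Fin n) :=
    fun p => (univ.filter (fun s : Fin n => s.val < p)).map π.toEmbedding with hSdef
  have htopu : ∀ p, topSum u p = topSum w p := by
    intro p; unfold topSum; rw [hu]
  have htopv : ∀ p, topSum v p = topSum w p := by
    intro p; unfold topSum; rw [hv]
  have hSw : ∀ p, ∑ i ∈ S p, w i = topSum w p := fun p => (topSum_eq_sum_map w p).symm
  have hScard : ∀ p, p ≤ n → (S p).card = p := by
    intro p hp; rw [hSdef]; simp only; rw [Finset.card_map, card_prefix hp]
  have hSu : ∀ p, p ≤ n → ∑ i ∈ S p, u i = topSum w p := by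
    intro p hp
    have h2 : ∑ i ∈ S p, u i ≤ topSum u p := by
      have := sum_le_topSum u (S p); rwa [hScard p hp] at this
    have h3 : ∑ i ∈ S p, v i ≤ topSum v p := by
      have := sum_le_topSum v (S p); rwa [hScard p hp] at this
    have h4 := sum_avg u v w hw (S p)
    have h5 := hSw p
    rw [htopu] at h2; rw [htopv] at h3
    linarith
  have hSv : ∀ p, p ≤ n → ∑ i ∈ S p, v i = topSum w p := by
    intro p hp
    have h2 : ∑ i ∈ S p, u i ≤ topSum u p := by
      have := sum_le_topSum u (S p); rwa [hScard p hp] at this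
    have h3 : ∑ i ∈ S p, v i ≤ topSum v p := by
      have := sum_le_topSum v (S p); rwa [hScard p hp] at this
    have h4 := sum_avg u v w hw (S p)
    have h5 := hSw p
    rw [htopu] at h2; rw [htopv] at h3
    linarith
  -- step: S (s+1) = insert (π s) (S s), π s ∉ S s
  have hstep : ∀ (f : Fin n → ℝ) (s : Fin n),
      ∑ i ∈ S (s.val + 1), f i = f (π s) + ∑ i ∈ S s.val, f i := by
    intro f s
    have h1 : S (s.val + 1) = insert (π s) (S s.val) := by
      rw [hSdef]; simp only
      rw [prefix_succ s, Finset.map_insert]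
      rfl
    have h2 : π s ∉ S s.val := by
      rw [hSdef]
      simp only [Finset.mem_map, mem_filter, mem_univ, true_and, Equiv.toEmbedding_apply]
      rintro ⟨j, hj, hj2⟩
      have : j = s := π.injective hj2
      omega
    rw [h1, Finset.sum_insert h2]
  have key : ∀ s : Fin n, u (π s) = w (π s) ∧ v (π s) = w (π s) := by
    intro s
    have hs1 : s.val + 1 ≤ n := s.isLt
    have hs0 : s.val ≤ n := le_of_lt s.isLt
    have e1 := hstep u s; have e2 := hstep v s; have e3 := hstep w s
    rw [hSu _ hs1, hSu _ hs0] at e1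
    rw [hSv _ hs1, hSv _ hs0] at e2
    rw [hSw, hSw] at e3
    constructor <;> linarith
  funext i
  have h1 := (key (π.symm i)).1
  have h2 := (key (π.symm i)).2
  rw [Equiv.apply_symm_apply] at h1 h2
  rw [h1, h2]
lemma avg_lex_contra {n : ℕ} (u v w : Fin n → ℝ)
    (hw : ∀ i, w i = (u i + v i) / 2) (s1 : Fin n)
    (hlt : sortedDesc u s1 < sortedDesc w s1)
    (hequ : ∀ s, s < s1 → sortedDesc u s = sortedDesc w s)
    (hlev : ∀ s, s ≤ s1 → sortedDesc v s ≤ sortedDesc w s) : False := by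
  set p := s1.val + 1 with hp
  have hpn : p ≤ n := s1.isLt
  have hmem : ∀ s : Fin n, s ∈ univ.filter (fun s : Fin n => s.val < p) ↔ s ≤ s1 := by
    intro s; simp only [mem_filter, mem_univ, true_and, hp]
    omega
  have h1 : topSum u p < topSum w p := by
    unfold topSum
    apply Finset.sum_lt_sum
    · intro s hs
      rcases lt_or_eq_of_le ((hmem s).mp hs) with h | h
      · exact le_of_eq (hequ s h)
      · subst h; exact le_of_lt hlt
    · exact ⟨s1, (hmem s1).mpr le_rfl, hlt⟩
  have h2 : topSum v p ≤ topSum w p := by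
    unfold topSum
    apply Finset.sum_le_sum
    intro s hs
    exact hlev s ((hmem s).mp hs)
  have := topSum_avg u v w hw p hpn
  linarith

lemma blockLex_trichotomy {m n : ℕ} (u v : Fin m → Fin n → ℝ) :
    u = v ∨ BlockLexLt u v ∨ BlockLexLt v u := by
  by_cases huv : u = v
  · exact Or.inl huv
  right
  have hT : (univ.filter (fun t : Fin m => ∃ s, u t s ≠ v t s)).Nonempty := by
    by_contra h
    apply huv
    funext t s
    rw [Finset.not_nonempty_iff_eq_empty, Finset.filter_eq_empty_iff] at h
    by_contra hne
    exact h (mem_univ t) ⟨s, hne⟩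
  set t0 := (univ.filter (fun t : Fin m => ∃ s, u t s ≠ v t s)).min' hT with ht0
  have ht0mem := (univ.filter (fun t : Fin m => ∃ s, u t s ≠ v t s)).min'_mem hT
  rw [mem_filter] at ht0mem
  have hS : (univ.filter (fun s : Fin n => u t0 s ≠ v t0 s)).Nonempty := by
    obtain ⟨s, hs⟩ := ht0mem.2
    exact ⟨s, by simpa using hs⟩
  set s0 := (univ.filter (fun s : Fin n => u t0 s ≠ v t0 s)).min' hS with hs0
  have hs0mem := (univ.filter (fun s : Fin n => u t0 s ≠ v t0 s)).min'_mem hS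
  rw [mem_filter] at hs0mem
  have hearly : ∀ t' s', (t' < t0 ∨ (t' = t0 ∧ s' < s0)) → u t' s' = v t' s' := by
    rintro t' s' (h | ⟨rfl, h⟩)
    · by_contra hne
      have : t0 ≤ t' := Finset.min'_le _ _ (by simp only [mem_filter, mem_univ, true_and]; exact ⟨s', hne⟩)
      omega
    · by_contra hne
      have : s0 ≤ s' := Finset.min'_le _ _ (by simp only [mem_filter, mem_univ, true_and]; exact hne)
      omega
  rcases lt_or_gt_of_ne hs0mem.2 with h | h
  · exact Or.inl ⟨t0, s0, h, hearly⟩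
  · exact Or.inr ⟨t0, s0, h, fun t' s' hh => (hearly t' s' hh).symm⟩

lemma tail_eq_imp_eq {n : ℕ} (rank : Fin n → Fin n → Fin n)
    (hrank : ∀ i, Function.Bijective (rank i)) (x y : Fin n → Fin n → ℝ)
    (h : ∀ i k, tailProb rank x i k = tailProb rank y i k) : x = y := by
  have claim : ∀ (K : ℕ) (i o : Fin n), n ≤ (rank i o).val + K → x i o = y i o := by
    intro K
    induction K with
    | zero => intro i o h'; exact absurd h' (by have := (rank i o).isLt; omega)
    | succ K ih =>
      intro i o h'
      have hsplit : ∀ z : Fin n → Fin n → ℝ,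
          tailProb rank z i (rank i o)
            = z i o + ∑ o' ∈ univ.filter (fun o' => rank i o < rank i o'), z i o' := by
        intro z
        have hset : univ.filter (fun o' => rank i o ≤ rank i o')
            = insert o (univ.filter (fun o' => rank i o < rank i o')) := by
          ext o'
          simp only [mem_filter, mem_univ, true_and, mem_insert]
          constructor
          · intro hh
            rcases lt_or_eq_of_le hh with hh | hh
            · exact Or.inr hh
            · exact Or.inl ((hrank i).1 hh.symm)
          · rintro (rfl | hh)
            · exact le_rfl
            · exact le_of_lt hh
        have hno : o ∉ univ.filter (fun o' => rank i o < rank i o') := by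
          simp
        rw [tailProb, hset, Finset.sum_insert hno]
      have hrest : ∑ o' ∈ univ.filter (fun o' => rank i o < rank i o'), x i o'
          = ∑ o' ∈ univ.filter (fun o' => rank i o < rank i o'), y i o' := by
        apply Finset.sum_congr rfl
        intro o' ho'
        rw [mem_filter] at ho'
        apply ih
        have : (rank i o).val < (rank i o').val := ho'.2
        omega
      have hx := hsplit x
      have hy := hsplit y
      have := h i (rank i o)
      rw [hx, hy, hrest] at this
      linarith
  funext i o
  exact claim n i o (by omega)

lemma sigma_surj {m : ℕ} (σ : Fin m → Fin (m + 1)) (hσinj : Function.Injective σ)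
    (hσne : ∀ j, σ j ≠ 0) (k : Fin (m + 1)) (hk : k ≠ 0) : ∃ j, σ j = k := by
  have h1 : (univ.image σ) ⊆ univ.filter (fun k : Fin (m+1) => k ≠ 0) := by
    intro a ha
    rw [mem_image] at ha
    obtain ⟨j, _, rfl⟩ := ha
    simp [hσne j]
  have hc1 : (univ.image σ).card = m := by
    rw [Finset.card_image_of_injective _ hσinj, Finset.card_univ, Fintype.card_fin]
  have hc2 : (univ.filter (fun k : Fin (m+1) => k ≠ 0)).card = m := by
    rw [Finset.filter_ne' univ 0, Finset.card_erase_of_mem (mem_univ 0), Finset.card_univ,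
      Fintype.card_fin]
    omega
  have heq : (univ.image σ) = univ.filter (fun k : Fin (m+1) => k ≠ 0) :=
    Finset.eq_of_subset_of_card_le h1 (by omega)
  have : k ∈ univ.image σ := by rw [heq]; simp [hk]
  rw [mem_image] at this
  obtain ⟨j, _, hj⟩ := this
  exact ⟨j, hj⟩
/-- For any ordering `σ` of the rank thresholds `{2,…,n}` (0-indexed: an injection of
`Fin m` into the nonzero ranks of `Fin (m+1)`), the σ-minimal assignment is unique. -/
theorem sigma_minimal_unique {m : ℕ} (σ : Fin m → Fin (m + 1))
    (hσinj : Function.Injective σ) (hσne : ∀ j, σ j ≠ 0)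
    (rank : Fin (m + 1) → Fin (m + 1) → Fin (m + 1))
    (hrank : ∀ i, Function.Bijective (rank i))
    (x y : Fin (m + 1) → Fin (m + 1) → ℝ)
    (hx : SigmaMinimal σ rank x) (hy : SigmaMinimal σ rank y) :
    x = y := by
  classical
  by_contra hxy
  obtain ⟨hxb, hxmin⟩ := hx
  obtain ⟨hyb, hymin⟩ := hy
  set z : Fin (m+1) → Fin (m+1) → ℝ := fun i o => (x i o + y i o) / 2 with hzdef
  have hzb : Bistochastic z := by
    refine ⟨fun i o => ?_, fun i => ?_, fun o => ?_⟩
    · have := hxb.1 i o; have := hyb.1 i o; simp only [hzdef]; linarith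
    · simp only [hzdef]
      rw [← Finset.sum_div, Finset.sum_add_distrib, hxb.2.1 i, hyb.2.1 i]
      norm_num
    · simp only [hzdef]
      rw [← Finset.sum_div, Finset.sum_add_distrib, hxb.2.2 o, hyb.2.2 o]
      norm_num
  have htail : ∀ i k, tailProb rank z i k
      = (tailProb rank x i k + tailProb rank y i k) / 2 := by
    intro i k
    unfold tailProb
    rw [← Finset.sum_div, Finset.sum_add_distrib]
  have notA : ¬ BlockLexLt (BvecSigma σ rank z) (BvecSigma σ rank x) := hxmin z hzb
  have notB : ¬ BlockLexLt (BvecSigma σ rank z) (BvecSigma σ rank y) := hymin z hzb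
  have hwblk : ∀ t : Fin m, ∀ i, tailProb rank z i (σ t)
      = (tailProb rank x i (σ t) + tailProb rank y i (σ t)) / 2 := fun t i => htail i (σ t)
  -- trichotomies
  have trA : BvecSigma σ rank z = BvecSigma σ rank x ∨
      BlockLexLt (BvecSigma σ rank x) (BvecSigma σ rank z) := by
    rcases blockLex_trichotomy (BvecSigma σ rank z) (BvecSigma σ rank x) with h | h | h
    · exact Or.inl h
    · exact absurd h notA
    · exact Or.inr h
  have trB : BvecSigma σ rank z = BvecSigma σ rank y ∨
      BlockLexLt (BvecSigma σ rank y) (BvecSigma σ rank z) := by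
    rcases blockLex_trichotomy (BvecSigma σ rank z) (BvecSigma σ rank y) with h | h | h
    · exact Or.inl h
    · exact absurd h notB
    · exact Or.inr h
  rcases trA with hCA | ⟨t1, s1, hlt1, he1⟩
  · rcases trB with hCB | ⟨t2, s2, hlt2, he2⟩
    · -- equality case
      apply hxy
      apply tail_eq_imp_eq rank hrank
      have hujvj : ∀ t : Fin m,
          (fun i => tailProb rank x i (σ t)) = (fun i => tailProb rank y i (σ t)) := by
        intro t
        apply avg_sorted_eq _ _ (fun i => tailProb rank z i (σ t)) (hwblk t)
        · exact (congrFun hCA t).symm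
        · exact (congrFun hCB t).symm
      intro i k
      by_cases hk : k = 0
      · subst hk
        have hfil : (univ.filter (fun o : Fin (m+1) => (0 : Fin (m+1)) ≤ rank i o)) = univ := by
          apply Finset.filter_true_of_mem
          intro o _
          exact Fin.zero_le _
        unfold tailProb
        rw [hfil, hxb.2.1 i, hyb.2.1 i]
      · obtain ⟨j, rfl⟩ := sigma_surj σ hσinj hσne k hk
        exact congrFun (hujvj j) i
    · -- C = A, B < C : contradiction at block t2
      exact avg_lex_contra (fun i => tailProb rank y i (σ t2))
        (fun i => tailProb rank x i (σ t2)) (fun i => tailProb rank z i (σ t2))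
        (fun i => by
          show tailProb rank z i (σ t2)
            = (tailProb rank y i (σ t2) + tailProb rank x i (σ t2)) / 2
          rw [hwblk t2 i]; ring) s2 hlt2
        (fun s hs => he2 t2 s (Or.inr ⟨rfl, hs⟩))
        (fun s hs => le_of_eq (congrFun (congrFun hCA t2) s).symm)
  · rcases trB with hCB | ⟨t2, s2, hlt2, he2⟩
    · -- A < C, C = B : contradiction at block t1
      exact avg_lex_contra (fun i => tailProb rank x i (σ t1))
        (fun i => tailProb rank y i (σ t1)) (fun i => tailProb rank z i (σ t1))
        (hwblk t1) s1 hlt1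
        (fun s hs => he1 t1 s (Or.inr ⟨rfl, hs⟩))
        (fun s hs => le_of_eq (congrFun (congrFun hCB t1) s).symm)
    · -- both strict
      have hcmp : (t1 < t2 ∨ (t1 = t2 ∧ s1 ≤ s2)) ∨ (t2 < t1 ∨ (t2 = t1 ∧ s2 ≤ s1)) := by
        rcases lt_trichotomy t1 t2 with h | h | h
        · exact Or.inl (Or.inl h)
        · rcases le_total s1 s2 with h' | h'
          · exact Or.inl (Or.inr ⟨h, h'⟩)
          · exact Or.inr (Or.inr ⟨h.symm, h'⟩)
        · exact Or.inr (Or.inl h)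
      rcases hcmp with hc | hc
      · apply avg_lex_contra (fun i => tailProb rank x i (σ t1))
          (fun i => tailProb rank y i (σ t1)) (fun i => tailProb rank z i (σ t1))
          (hwblk t1) s1 hlt1
          (fun s hs => he1 t1 s (Or.inr ⟨rfl, hs⟩))
        intro s hs
        rcases hc with ht | ⟨heq, hs12⟩
        · exact le_of_eq (he2 t1 s (Or.inl ht))
        · subst heq
          rcases lt_or_eq_of_le (le_trans hs hs12) with h | h
          · exact le_of_eq (he2 t1 s (Or.inr ⟨rfl, h⟩))
          · subst h
            exact le_of_lt hlt2
      · apply avg_lex_contra (fun i => tailProb rank y i (σ t2))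
          (fun i => tailProb rank x i (σ t2)) (fun i => tailProb rank z i (σ t2))
          (fun i => by
          show tailProb rank z i (σ t2)
            = (tailProb rank y i (σ t2) + tailProb rank x i (σ t2)) / 2
          rw [hwblk t2 i]; ring) s2 hlt2
          (fun s hs => he2 t2 s (Or.inr ⟨rfl, hs⟩))
        intro s hs
        rcases hc with ht | ⟨heq, hs21⟩
        · exact le_of_eq (he1 t2 s (Or.inl ht))
        · subst heq
          rcases lt_or_eq_of_le (le_trans hs hs21) with h | h
          · exact le_of_eq (he1 t2 s (Or.inr ⟨rfl, h⟩))
          · subst h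
            exact le_of_lt hlt1
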